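/- (RNSP ⇒ ℓ² distance bound) If A : ℓ²(Λ) → H^m satisfies the robust null space property with respect to (ω, ρ, κ, s), then for all x, z ∈ ℓ¹_ω(Λ): ‖x − z‖₂ ≤ (c₁/√s)(‖z‖_{1,ω} − ‖x‖_{1,ω} + 2σ_s(x)_{1,ω}) + c₂‖A(x−z)‖, where c₁ = (ρ+1)(1+ρ)/(1−ρ) and c₂ = (ρ+1)·2κ/(1−ρ) + κ. -/

import Mathlib

open scoped ENNReal Classical

/-- Weighted `ℓ¹` norm (with value in `ℝ≥0∞`). -/
noncomputable def ewnorm1 {Λ : Type*} (ω : Λ → ℝ) (x : Λ → ℂ) : ℝ≥0∞ :=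
  ∑' i, ENNReal.ofReal (‖x i‖ * ω i)

/-- Weighted `ℓ¹` norm (real-valued, for summable vectors). -/
noncomputable def wnorm1 {Λ : Type*} (ω : Λ → ℝ) (x : Λ → ℂ) : ℝ :=
  ∑' i, ‖x i‖ * ω i

/-- Error of best `s`-`ω`-sparse approximation of `x` in `ℓ¹_ω`. -/
noncomputable def sigma1 {Λ : Type*} (ω : Λ → ℝ) (s : ℝ) (x : Λ → ℂ) : ℝ :=
  sInf {t : ℝ | ∃ y : Λ → ℂ,
    (∑' i, if y i = 0 then (0 : ℝ≥0∞) else ENNReal.ofReal (ω i ^ 2)) ≤ ENNReal.ofReal s ∧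
    Summable (fun i => ‖x i - y i‖ * ω i) ∧ t = wnorm1 ω (fun i => x i - y i)}

/-- The robust null space property with respect to `(ω, ρ, κ, s)`. -/
def RNSP {Λ E : Type*} [NormedAddCommGroup E] [NormedSpace ℂ E]
    (A : (Λ → ℂ) →ₗ[ℂ] E) (ω : Λ → ℝ) (ρ κ : ℝ) (s : ℕ) : Prop :=
  ∀ x : Λ → ℂ, Memℓp x 2 → ∀ S : Finset Λ, (∑ i ∈ S, ω i ^ 2) ≤ (s : ℝ) →
    ENNReal.ofReal (Real.sqrt (∑ i ∈ S, ‖x i‖ ^ 2)) ≤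
      ENNReal.ofReal (ρ / Real.sqrt s) * ewnorm1 ω (fun i => if i ∈ S then 0 else x i) +
        ENNReal.ofReal (κ * ‖A x‖)

lemma my_sqrt_add_le {a b : ℝ} (ha : 0 ≤ a) (hb : 0 ≤ b) :
    Real.sqrt (a + b) ≤ Real.sqrt a + Real.sqrt b := by
  have h : a + b ≤ (Real.sqrt a + Real.sqrt b) ^ 2 := by
    have := Real.sq_sqrt ha
    have := Real.sq_sqrt hb
    have := Real.sqrt_nonneg a
    have := Real.sqrt_nonneg b
    nlinarith
  calc Real.sqrt (a + b) ≤ Real.sqrt ((Real.sqrt a + Real.sqrt b) ^ 2) := Real.sqrt_le_sqrt h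
    _ = Real.sqrt a + Real.sqrt b := Real.sqrt_sq (by positivity)

/-- real-form RNSP -/
lemma rnsp_real {Λ E : Type*} [NormedAddCommGroup E] [NormedSpace ℂ E]
    (A : (Λ → ℂ) →ₗ[ℂ] E) (ω : Λ → ℝ) (hω : ∀ i, 1 ≤ ω i) (s : ℕ)
    (ρ κ : ℝ) (hρ0 : 0 ≤ ρ) (hκ : 0 ≤ κ) (hA : RNSP A ω ρ κ s)
    (v : Λ → ℂ) (hv1 : Summable fun i => ‖v i‖ * ω i) (hv2 : Memℓp v 2)
    (S : Finset Λ) (hS : (∑ i ∈ S, ω i ^ 2) ≤ (s : ℝ)) :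
    Real.sqrt (∑ i ∈ S, ‖v i‖ ^ 2) ≤
      ρ / Real.sqrt s * (∑' i, if i ∈ S then (0:ℝ) else ‖v i‖ * ω i) + κ * ‖A v‖ := by
  have hnn : ∀ i, (0:ℝ) ≤ ‖v i‖ * ω i := fun i =>
    mul_nonneg (norm_nonneg _) (le_trans zero_le_one (hω i))
  have hnn' : ∀ i, (0:ℝ) ≤ (if i ∈ S then (0:ℝ) else ‖v i‖ * ω i) := fun i => by
    split
    · exact le_refl 0
    · exact hnn i
  have hsum : Summable fun i => if i ∈ S then (0:ℝ) else ‖v i‖ * ω i := by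
    apply Summable.of_nonneg_of_le hnn' (fun i => ?_) hv1
    split
    · exact hnn i
    · exact le_refl _
  have htn : (0:ℝ) ≤ ∑' i, if i ∈ S then (0:ℝ) else ‖v i‖ * ω i := tsum_nonneg hnn'
  have key := hA v hv2 S hS
  have he : ewnorm1 ω (fun i => if i ∈ S then 0 else v i) =
      ENNReal.ofReal (∑' i, if i ∈ S then (0:ℝ) else ‖v i‖ * ω i) := by
    rw [ewnorm1, ENNReal.ofReal_tsum_of_nonneg hnn' hsum]
    congr 1
    funext i
    split <;> simp
  rw [he, ← ENNReal.ofReal_mul (by positivity),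
    ← ENNReal.ofReal_add (mul_nonneg (by positivity) htn) (mul_nonneg hκ (norm_nonneg _))] at key
  exact (ENNReal.ofReal_le_ofReal_iff
    (add_nonneg (mul_nonneg (by positivity) htn) (mul_nonneg hκ (norm_nonneg _)))).1 key

/-- ℓ¹ null space property consequence -/
lemma nsp_l1 {Λ E : Type*} [NormedAddCommGroup E] [NormedSpace ℂ E]
    (A : (Λ → ℂ) →ₗ[ℂ] E) (ω : Λ → ℝ) (hω : ∀ i, 1 ≤ ω i) (s : ℕ) (hs : 1 ≤ s)
    (ρ κ : ℝ) (hρ0 : 0 ≤ ρ) (hκ : 0 ≤ κ) (hA : RNSP A ω ρ κ s)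
    (v : Λ → ℂ) (hv1 : Summable fun i => ‖v i‖ * ω i) (hv2 : Memℓp v 2)
    (S : Finset Λ) (hS : (∑ i ∈ S, ω i ^ 2) ≤ (s : ℝ)) :
    (∑ i ∈ S, ‖v i‖ * ω i) ≤
      ρ * (∑' i, if i ∈ S then (0:ℝ) else ‖v i‖ * ω i) + κ * Real.sqrt s * ‖A v‖ := by
  have hss : (0:ℝ) < Real.sqrt s := Real.sqrt_pos.2 (by exact_mod_cast hs)
  have hnn : ∀ i, (0:ℝ) ≤ ‖v i‖ * ω i := fun i =>
    mul_nonneg (norm_nonneg _) (le_trans zero_le_one (hω i))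
  have hsq : (0:ℝ) ≤ ∑ i ∈ S, ‖v i‖ ^ 2 := Finset.sum_nonneg fun i _ => sq_nonneg _
  have hcs : (∑ i ∈ S, ‖v i‖ * ω i) ≤ Real.sqrt s * Real.sqrt (∑ i ∈ S, ‖v i‖ ^ 2) := by
    have h1 := Finset.sum_mul_sq_le_sq_mul_sq S (fun i => ω i) (fun i => ‖v i‖)
    have h2 : (∑ i ∈ S, ω i * ‖v i‖) ^ 2 ≤ (s : ℝ) * ∑ i ∈ S, ‖v i‖ ^ 2 :=
      h1.trans (mul_le_mul_of_nonneg_right hS hsq)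
    have h3 : (∑ i ∈ S, ‖v i‖ * ω i) = ∑ i ∈ S, ω i * ‖v i‖ := by
      apply Finset.sum_congr rfl; intro i _; ring
    rw [h3]
    calc (∑ i ∈ S, ω i * ‖v i‖) = Real.sqrt ((∑ i ∈ S, ω i * ‖v i‖) ^ 2) :=
          (Real.sqrt_sq (Finset.sum_nonneg fun i _ => by
            rw [mul_comm]; exact hnn i)).symm
      _ ≤ Real.sqrt ((s : ℝ) * ∑ i ∈ S, ‖v i‖ ^ 2) := Real.sqrt_le_sqrt h2
      _ = Real.sqrt s * Real.sqrt (∑ i ∈ S, ‖v i‖ ^ 2) := Real.sqrt_mul (by positivity) _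
  have hr := rnsp_real A ω hω s ρ κ hρ0 hκ hA v hv1 hv2 S hS
  calc (∑ i ∈ S, ‖v i‖ * ω i) ≤ Real.sqrt s * Real.sqrt (∑ i ∈ S, ‖v i‖ ^ 2) := hcs
    _ ≤ Real.sqrt s * (ρ / Real.sqrt s * (∑' i, if i ∈ S then (0:ℝ) else ‖v i‖ * ω i)
          + κ * ‖A v‖) := by
        exact mul_le_mul_of_nonneg_left hr hss.le
    _ = ρ * (∑' i, if i ∈ S then (0:ℝ) else ‖v i‖ * ω i) + κ * Real.sqrt s * ‖A v‖ := by
        field_simp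

lemma tsum_split {Λ : Type*} (f : Λ → ℝ) (hf : Summable f) (S : Finset Λ) :
    ∑' i, f i = (∑ i ∈ S, f i) + ∑' i, (if i ∈ S then (0:ℝ) else f i) := by
  classical
  have hg : Summable (fun i => if i ∈ S then f i else (0:ℝ)) :=
    summable_of_ne_finset_zero (s := S) (fun i hi => if_neg hi)
  have heq : (fun i => if i ∈ S then (0:ℝ) else f i)
      = f - (fun i => if i ∈ S then f i else 0) := by
    funext i; by_cases h : i ∈ S <;> simp [h]
  have hh : Summable (fun i => if i ∈ S then (0:ℝ) else f i) := by
    rw [heq]; exact hf.sub hg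
  have h1 : ∀ i, f i = (if i ∈ S then f i else 0) + (if i ∈ S then (0:ℝ) else f i) := by
    intro i; by_cases h : i ∈ S <;> simp [h]
  calc ∑' i, f i = ∑' i, ((if i ∈ S then f i else 0) + (if i ∈ S then (0:ℝ) else f i)) := by
        congr 1; funext i; exact h1 i
    _ = (∑' i, if i ∈ S then f i else 0) + ∑' i, (if i ∈ S then (0:ℝ) else f i) :=
        Summable.tsum_add hg hh
    _ = (∑ i ∈ S, f i) + ∑' i, (if i ∈ S then (0:ℝ) else f i) := by
        congr 1
        rw [tsum_eq_sum (s := S) (fun i hi => if_neg hi)]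
        exact Finset.sum_congr rfl (fun i hi => if_pos hi)

lemma l2_of_l1 {Λ E : Type*} [NormedAddCommGroup E] [NormedSpace ℂ E]
    (A : (Λ → ℂ) →ₗ[ℂ] E) (ω : Λ → ℝ) (hω : ∀ i, 1 ≤ ω i) (s : ℕ) (hs : 1 ≤ s)
    (ρ κ : ℝ) (hρ0 : 0 ≤ ρ) (hκ : 0 ≤ κ) (hA : RNSP A ω ρ κ s)
    (v : Λ → ℂ) (hv1 : Summable fun i => ‖v i‖ * ω i) :
    Real.sqrt (∑' i, ‖v i‖ ^ 2) ≤
      (ρ + 1) / Real.sqrt s * (∑' i, ‖v i‖ * ω i) + κ * ‖A v‖ := by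
  classical
  have hnn : ∀ i, (0:ℝ) ≤ ‖v i‖ * ω i := fun i =>
    mul_nonneg (norm_nonneg _) (le_trans zero_le_one (hω i))
  have hs0 : (0:ℝ) < s := by exact_mod_cast hs
  have hss : (0:ℝ) < Real.sqrt s := Real.sqrt_pos.2 hs0
  have hvn : Summable fun i => ‖v i‖ := by
    apply Summable.of_nonneg_of_le (fun i => norm_nonneg _) (fun i => ?_) hv1
    nth_rewrite 1 [← mul_one ‖v i‖]
    exact mul_le_mul_of_nonneg_left (hω i) (norm_nonneg _)
  set T : ℝ := ∑' i, ‖v i‖ with hT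
  have hvleT : ∀ i, ‖v i‖ ≤ T := fun i => Summable.le_tsum hvn i (fun j _ => norm_nonneg _)
  have hv2sum : Summable fun i => ‖v i‖ ^ 2 := by
    apply Summable.of_nonneg_of_le (fun i => sq_nonneg _) (fun i => ?_) (hvn.mul_left T)
    rw [sq]
    exact mul_le_mul_of_nonneg_right (hvleT i) (norm_nonneg _)
  have hmem : Memℓp v 2 := by
    apply memℓp_gen
    have : (2 : ℝ≥0∞).toReal = ((2:ℕ):ℝ) := by norm_num
    rw [this]
    simpa [Real.rpow_natCast] using hv2sum
  set L : ℝ := ∑' i, ‖v i‖ * ω i with hL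
  have hL0 : 0 ≤ L := tsum_nonneg hnn
  by_cases hvz : ∀ i, v i = 0
  · have h0 : ∑' i, ‖v i‖ ^ 2 = 0 := by
      have : (fun i => ‖v i‖ ^ 2) = fun _ => (0:ℝ) := by funext i; simp [hvz i]
      rw [this, tsum_zero]
    rw [h0, Real.sqrt_zero]
    positivity
  · push_neg at hvz
    obtain ⟨i₀, hi₀⟩ := hvz
    have hLpos : 0 < L := by
      have h1 : 0 < ‖v i₀‖ * ω i₀ :=
        mul_pos (norm_pos_iff.2 hi₀) (lt_of_lt_of_le zero_lt_one (hω i₀))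
      exact lt_of_lt_of_le h1 (Summable.le_tsum hv1 i₀ (fun j _ => hnn j))
    have hLs : 0 < L / s := div_pos hLpos hs0
    have hev : ∀ᶠ i in Filter.cofinite, ‖v i‖ * ω i < L / s :=
      hv1.tendsto_cofinite_zero.eventually_lt_const hLs
    have hfin0 : {i | ¬ ‖v i‖ * ω i < L / s}.Finite := Filter.eventually_cofinite.mp hev
    have hsub : {i | L * ω i < s * ‖v i‖} ⊆ {i | ¬ ‖v i‖ * ω i < L / s} := by
      intro i hi
      simp only [Set.mem_setOf_eq, not_lt] at hi ⊢
      have hω1 : (1:ℝ) ≤ ω i := hω i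
      have : L / s < ‖v i‖ := by
        rw [div_lt_iff₀ hs0]
        calc L ≤ L * ω i := le_mul_of_one_le_right hL0 hω1
          _ < s * ‖v i‖ := hi
          _ = ‖v i‖ * s := by ring
      calc L / s ≤ ‖v i‖ := this.le
        _ ≤ ‖v i‖ * ω i := le_mul_of_one_le_right (norm_nonneg _) hω1
    have hfin : {i | L * ω i < s * ‖v i‖}.Finite := hfin0.subset hsub
    set S : Finset Λ := hfin.toFinset with hSdef
    have hmemS : ∀ i, i ∈ S ↔ L * ω i < s * ‖v i‖ := by
      intro i; rw [hSdef, Set.Finite.mem_toFinset]; rfl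
    -- weight bound
    have hSw : (∑ i ∈ S, ω i ^ 2) ≤ (s : ℝ) := by
      have h1 : ∀ i ∈ S, ω i ^ 2 ≤ (s / L) * (‖v i‖ * ω i) := by
        intro i hi
        have h2 : L * ω i < s * ‖v i‖ := (hmemS i).1 hi
        have hω0 : 0 < ω i := lt_of_lt_of_le zero_lt_one (hω i)
        rw [sq]
        rw [div_mul_eq_mul_div, le_div_iff₀ hLpos]
        calc ω i * ω i * L = (L * ω i) * ω i := by ring
          _ ≤ (s * ‖v i‖) * ω i := mul_le_mul_of_nonneg_right h2.le hω0.le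
          _ = s * (‖v i‖ * ω i) := by ring
      calc (∑ i ∈ S, ω i ^ 2) ≤ ∑ i ∈ S, (s / L) * (‖v i‖ * ω i) :=
            Finset.sum_le_sum h1
        _ = (s / L) * ∑ i ∈ S, ‖v i‖ * ω i := by rw [Finset.mul_sum]
        _ ≤ (s / L) * L := by
            apply mul_le_mul_of_nonneg_left _ (by positivity)
            exact Summable.sum_le_tsum S (fun i _ => hnn i) hv1
        _ = s := by field_simp
    -- tail bound
    have htail : (∑' i, if i ∈ S then (0:ℝ) else ‖v i‖ ^ 2) ≤ L / s * L := by
      have hsum2 : Summable (fun i => if i ∈ S then (0:ℝ) else ‖v i‖ ^ 2) := by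
        apply Summable.of_nonneg_of_le (fun i => by split <;> positivity)
          (fun i => ?_) hv2sum
        split
        · positivity
        · exact le_refl _
      have hb : ∀ i, (if i ∈ S then (0:ℝ) else ‖v i‖ ^ 2) ≤
          L / s * (if i ∈ S then (0:ℝ) else ‖v i‖ * ω i) := by
        intro i
        by_cases hi : i ∈ S
        · simp [hi]
        · simp only [hi, if_false]
          have h2 : s * ‖v i‖ ≤ L * ω i := by
            have := (hmemS i).not.1 hi
            linarith [not_lt.1 (fun h => hi ((hmemS i).2 h))]
          have h3 : ‖v i‖ ≤ L / s * ω i := by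
            rw [div_mul_eq_mul_div, le_div_iff₀ hs0]
            linarith
          calc ‖v i‖ ^ 2 = ‖v i‖ * ‖v i‖ := sq ‖v i‖
            _ ≤ (L / s * ω i) * ‖v i‖ := mul_le_mul_of_nonneg_right h3 (norm_nonneg _)
            _ = L / s * (‖v i‖ * ω i) := by ring
      have hsum3 : Summable (fun i => L / s * (if i ∈ S then (0:ℝ) else ‖v i‖ * ω i)) := by
        apply Summable.mul_left
        apply Summable.of_nonneg_of_le (fun i => by
          split
          · exact le_refl 0
          · exact hnn i) (fun i => ?_) hv1
        split
        · exact hnn i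
        · exact le_refl _
      calc (∑' i, if i ∈ S then (0:ℝ) else ‖v i‖ ^ 2)
          ≤ ∑' i, L / s * (if i ∈ S then (0:ℝ) else ‖v i‖ * ω i) := Summable.tsum_le_tsum hb hsum2 hsum3
        _ = L / s * ∑' i, (if i ∈ S then (0:ℝ) else ‖v i‖ * ω i) := tsum_mul_left
        _ ≤ L / s * L := by
            apply mul_le_mul_of_nonneg_left _ hLs.le
            apply Summable.tsum_le_tsum _ _ hv1
            · intro i
              split
              · exact hnn i
              · exact le_refl _
            · apply Summable.of_nonneg_of_le (fun i => by
                split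
                · exact le_refl 0
                · exact hnn i) (fun i => ?_) hv1
              split
              · exact hnn i
              · exact le_refl _
    have hTile : (∑' i, if i ∈ S then (0:ℝ) else ‖v i‖ * ω i) ≤ L := by
      apply Summable.tsum_le_tsum _ _ hv1
      · intro i
        split
        · exact hnn i
        · exact le_refl _
      · apply Summable.of_nonneg_of_le (fun i => by
          split
          · exact le_refl 0
          · exact hnn i) (fun i => ?_) hv1
        split
        · exact hnn i
        · exact le_refl _
    have hsplit := tsum_split (fun i => ‖v i‖ ^ 2) hv2sum S
    have hrnsp := rnsp_real A ω hω s ρ κ hρ0 hκ hA v hv1 hmem S hSw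
    have htail_sqrt : Real.sqrt (∑' i, if i ∈ S then (0:ℝ) else ‖v i‖ ^ 2) ≤ L / Real.sqrt s := by
      have h1 : Real.sqrt (∑' i, if i ∈ S then (0:ℝ) else ‖v i‖ ^ 2) ≤
          Real.sqrt (L / s * L) := Real.sqrt_le_sqrt htail
      have h2 : L / s * L = (L / Real.sqrt s) ^ 2 := by
        rw [div_pow, Real.sq_sqrt hs0.le]
        ring
      rw [h2, Real.sqrt_sq (by positivity)] at h1
      exact h1
    calc Real.sqrt (∑' i, ‖v i‖ ^ 2)
        = Real.sqrt ((∑ i ∈ S, ‖v i‖ ^ 2) + ∑' i, (if i ∈ S then (0:ℝ) else ‖v i‖ ^ 2)) := by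
          rw [hsplit]
      _ ≤ Real.sqrt (∑ i ∈ S, ‖v i‖ ^ 2) +
          Real.sqrt (∑' i, (if i ∈ S then (0:ℝ) else ‖v i‖ ^ 2)) :=
          my_sqrt_add_le (Finset.sum_nonneg fun i _ => sq_nonneg _)
            (tsum_nonneg fun i => by split <;> positivity)
      _ ≤ (ρ / Real.sqrt s * (∑' i, if i ∈ S then (0:ℝ) else ‖v i‖ * ω i) + κ * ‖A v‖)
          + L / Real.sqrt s := add_le_add hrnsp htail_sqrt
      _ ≤ (ρ / Real.sqrt s * L + κ * ‖A v‖) + L / Real.sqrt s := by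
          have := mul_le_mul_of_nonneg_left hTile (by positivity : (0:ℝ) ≤ ρ / Real.sqrt s)
          linarith
      _ = (ρ + 1) / Real.sqrt s * L + κ * ‖A v‖ := by
          field_simp
          ring

lemma supp_lemma {Λ : Type*} (ω : Λ → ℝ) (hω : ∀ i, 1 ≤ ω i) (s : ℕ) (y : Λ → ℂ)
    (hy : (∑' i, if y i = 0 then (0 : ℝ≥0∞) else ENNReal.ofReal (ω i ^ 2)) ≤
      ENNReal.ofReal s) :
    ∃ S : Finset Λ, (∀ i, i ∈ S ↔ y i ≠ 0) ∧ (∑ i ∈ S, ω i ^ 2) ≤ (s : ℝ) := by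
  classical
  have hy' : (∑' i, if y i = 0 then (0 : ℝ≥0∞) else ENNReal.ofReal (ω i ^ 2)) ≤ (s : ℝ≥0∞) := by
    rwa [ENNReal.ofReal_natCast] at hy
  have hone : ∀ i, y i ≠ 0 →
      (1 : ℝ≥0∞) ≤ (if y i = 0 then (0 : ℝ≥0∞) else ENNReal.ofReal (ω i ^ 2)) := by
    intro i hi
    rw [if_neg hi]
    have h1 : (1:ℝ) ≤ ω i ^ 2 := by nlinarith [hω i]
    calc (1 : ℝ≥0∞) = ENNReal.ofReal 1 := by simp
      _ ≤ ENNReal.ofReal (ω i ^ 2) := ENNReal.ofReal_le_ofReal h1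
  have hfin : {i | y i ≠ 0}.Finite := by
    by_contra hinf
    rw [← Set.not_infinite, not_not] at hinf
    obtain ⟨T, hTsub, hTcard⟩ := hinf.exists_subset_card_eq (s + 1)
    have h1 : ((s:ℝ≥0∞) + 1) ≤ ∑ i ∈ T, (if y i = 0 then (0 : ℝ≥0∞) else ENNReal.ofReal (ω i ^ 2)) := by
      calc ((s:ℝ≥0∞) + 1) = ∑ _i ∈ T, (1:ℝ≥0∞) := by
            rw [Finset.sum_const, hTcard]; simp [add_comm]
        _ ≤ _ := Finset.sum_le_sum (fun i hi => hone i (hTsub hi))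
    have h2 := h1.trans ((ENNReal.sum_le_tsum T).trans hy')
    exact absurd h2 (not_le.2 (ENNReal.lt_add_right (ENNReal.natCast_ne_top s) one_ne_zero))
  refine ⟨hfin.toFinset, fun i => by rw [Set.Finite.mem_toFinset]; rfl, ?_⟩
  have h3 : ENNReal.ofReal (∑ i ∈ hfin.toFinset, ω i ^ 2) ≤ (s : ℝ≥0∞) := by
    rw [ENNReal.ofReal_sum_of_nonneg (fun i _ => sq_nonneg _)]
    calc (∑ i ∈ hfin.toFinset, ENNReal.ofReal (ω i ^ 2))
        = ∑ i ∈ hfin.toFinset, (if y i = 0 then (0 : ℝ≥0∞) else ENNReal.ofReal (ω i ^ 2)) := by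
          apply Finset.sum_congr rfl
          intro i hi
          rw [Set.Finite.mem_toFinset] at hi
          rw [if_neg hi]
      _ ≤ _ := (ENNReal.sum_le_tsum _).trans hy'
  rw [← ENNReal.ofReal_natCast] at h3
  exact (ENNReal.ofReal_le_ofReal_iff (Nat.cast_nonneg s)).1 h3

lemma mem_l2 {Λ : Type*} (ω : Λ → ℝ) (hω : ∀ i, 1 ≤ ω i) (v : Λ → ℂ)
    (hv1 : Summable fun i => ‖v i‖ * ω i) : Memℓp v 2 := by
  have hvn : Summable fun i => ‖v i‖ := by
    apply Summable.of_nonneg_of_le (fun i => norm_nonneg _) (fun i => ?_) hv1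
    nth_rewrite 1 [← mul_one ‖v i‖]
    exact mul_le_mul_of_nonneg_left (hω i) (norm_nonneg _)
  have hvleT : ∀ i, ‖v i‖ ≤ ∑' j, ‖v j‖ := fun i => Summable.le_tsum hvn i (fun j _ => norm_nonneg _)
  have hv2sum : Summable fun i => ‖v i‖ ^ 2 := by
    apply Summable.of_nonneg_of_le (fun i => sq_nonneg _) (fun i => ?_)
      (hvn.mul_left (∑' j, ‖v j‖))
    rw [sq]
    exact mul_le_mul_of_nonneg_right (hvleT i) (norm_nonneg _)
  apply memℓp_gen
  have h2 : (2 : ℝ≥0∞).toReal = ((2:ℕ):ℝ) := by norm_num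
  rw [h2]
  simpa [Real.rpow_natCast] using hv2sum

lemma ite_summ {Λ : Type*} (S : Finset Λ) (f : Λ → ℝ) (hf : Summable f) (h0 : ∀ i, 0 ≤ f i) :
    Summable (fun i => if i ∈ S then (0:ℝ) else f i) := by
  apply Summable.of_nonneg_of_le (fun i => ?_) (fun i => ?_) hf
  · split
    · exact le_refl 0
    · exact h0 i
  · split
    · exact h0 i
    · exact le_refl _

/-- RNSP ⇒ ℓ² distance bound: if `A` satisfies the RNSP w.r.t. `(ω, ρ, κ, s)`, then for all
`x, z ∈ ℓ¹_ω(Λ)`: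
`‖x − z‖₂ ≤ (c₁/√s)(‖z‖_{1,ω} − ‖x‖_{1,ω} + 2σ_s(x)_{1,ω}) + c₂‖A(x−z)‖`, where
`c₁ = (ρ+1)(1+ρ)/(1−ρ)` and `c₂ = (ρ+1)·2κ/(1−ρ) + κ`. -/
theorem stmt4 {Λ E : Type*} [Countable Λ] [NormedAddCommGroup E] [NormedSpace ℂ E]
    (A : (Λ → ℂ) →ₗ[ℂ] E) (ω : Λ → ℝ) (hω : ∀ i, 1 ≤ ω i) (s : ℕ) (hs : 1 ≤ s)
    (ρ κ : ℝ) (hρ0 : 0 < ρ) (hρ : ρ < 1) (hκ : 0 < κ)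
    (hA : RNSP A ω ρ κ s)
    (x z : Λ → ℂ) (hx1 : Summable fun i => ‖x i‖ * ω i)
    (hz1 : Summable fun i => ‖z i‖ * ω i) :
    Real.sqrt (∑' i, ‖x i - z i‖ ^ 2) ≤
      ((ρ + 1) * ((1 + ρ) / (1 - ρ))) / Real.sqrt s *
          (wnorm1 ω z - wnorm1 ω x + 2 * sigma1 ω s x) +
        ((ρ + 1) * (2 * κ / (1 - ρ)) + κ) * ‖A (x - z)‖ := by
  classical
  have hωnn : ∀ i, (0:ℝ) ≤ ω i := fun i => le_trans zero_le_one (hω i)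
  set v : Λ → ℂ := fun i => x i - z i with hvdef
  have hxz : x - z = v := rfl
  rw [hxz]
  have hv1 : Summable fun i => ‖v i‖ * ω i := by
    apply Summable.of_nonneg_of_le (fun i => mul_nonneg (norm_nonneg _) (hωnn i))
      (fun i => ?_) (hx1.add hz1)
    calc ‖v i‖ * ω i ≤ (‖x i‖ + ‖z i‖) * ω i :=
          mul_le_mul_of_nonneg_right (norm_sub_le _ _) (hωnn i)
      _ = ‖x i‖ * ω i + ‖z i‖ * ω i := by ring
  have h1ρ : (0:ℝ) < 1 - ρ := by linarith
  have hs0 : (0:ℝ) < s := by exact_mod_cast hs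
  set r : ℝ := Real.sqrt s with hrdef
  have hr : 0 < r := Real.sqrt_pos.2 hs0
  set c : ℝ := ((ρ + 1) * ((1 + ρ) / (1 - ρ))) / r with hcdef
  set C2 : ℝ := (ρ + 1) * (2 * κ / (1 - ρ)) + κ with hC2def
  have hcpos : 0 < c :=
    div_pos (mul_pos (by linarith) (div_pos (by linarith) h1ρ)) hr
  set Δ : ℝ := wnorm1 ω z - wnorm1 ω x with hΔdef
  set SigSet : Set ℝ := {t : ℝ | ∃ y : Λ → ℂ,
    (∑' i, if y i = 0 then (0 : ℝ≥0∞) else ENNReal.ofReal (ω i ^ 2)) ≤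
      ENNReal.ofReal (s:ℝ) ∧
    Summable (fun i => ‖x i - y i‖ * ω i) ∧ t = wnorm1 ω (fun i => x i - y i)} with hSig
  have hne : SigSet.Nonempty := by
    refine ⟨wnorm1 ω (fun i => x i - (0:Λ → ℂ) i), (0:Λ → ℂ), by simp, ?_, rfl⟩
    simpa using hx1
  have key : ∀ t ∈ SigSet, Real.sqrt (∑' i, ‖v i‖ ^ 2) ≤ c * (Δ + 2 * t) + C2 * ‖A v‖ := by
    rintro t ⟨y, hysp, hysum, hteq⟩
    obtain ⟨S, hSmem, hSw⟩ := supp_lemma ω hω s y hysp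
    have hnnv : ∀ i, (0:ℝ) ≤ ‖v i‖ * ω i := fun i => mul_nonneg (norm_nonneg _) (hωnn i)
    have hnnx : ∀ i, (0:ℝ) ≤ ‖x i‖ * ω i := fun i => mul_nonneg (norm_nonneg _) (hωnn i)
    have hnnz : ∀ i, (0:ℝ) ≤ ‖z i‖ * ω i := fun i => mul_nonneg (norm_nonneg _) (hωnn i)
    set TvS : ℝ := ∑' i, (if i ∈ S then (0:ℝ) else ‖v i‖ * ω i) with hTvS
    set TxS : ℝ := ∑' i, (if i ∈ S then (0:ℝ) else ‖x i‖ * ω i) with hTxS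
    set TzS : ℝ := ∑' i, (if i ∈ S then (0:ℝ) else ‖z i‖ * ω i) with hTzS
    have hsumv := ite_summ S _ hv1 hnnv
    have hsumx := ite_summ S _ hx1 hnnx
    have hsumz := ite_summ S _ hz1 hnnz
    -- splits
    have hwv : (∑' i, ‖v i‖ * ω i) = (∑ i ∈ S, ‖v i‖ * ω i) + TvS := tsum_split _ hv1 S
    have hwx : wnorm1 ω x = (∑ i ∈ S, ‖x i‖ * ω i) + TxS := tsum_split _ hx1 S
    have hwz : wnorm1 ω z = (∑ i ∈ S, ‖z i‖ * ω i) + TzS := tsum_split _ hz1 S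
    -- f3 : TvS ≤ TxS + TzS
    have f3 : TvS ≤ TxS + TzS := by
      rw [hTvS, hTxS, hTzS, ← Summable.tsum_add hsumx hsumz]
      apply Summable.tsum_le_tsum _ hsumv (hsumx.add hsumz)
      intro i
      by_cases hi : i ∈ S
      · simp [hi]
      · simp only [hi, if_false]
        calc ‖v i‖ * ω i ≤ (‖x i‖ + ‖z i‖) * ω i :=
              mul_le_mul_of_nonneg_right (norm_sub_le _ _) (hωnn i)
          _ = ‖x i‖ * ω i + ‖z i‖ * ω i := by ring
    -- f4 : axS ≤ azS + avS
    have f4 : (∑ i ∈ S, ‖x i‖ * ω i) ≤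
        (∑ i ∈ S, ‖z i‖ * ω i) + (∑ i ∈ S, ‖v i‖ * ω i) := by
      rw [← Finset.sum_add_distrib]
      apply Finset.sum_le_sum
      intro i _
      have h1 : ‖x i‖ ≤ ‖z i‖ + ‖v i‖ := by
        have : x i = z i + v i := by simp [hvdef]
        rw [this]
        exact norm_add_le _ _
      calc ‖x i‖ * ω i ≤ (‖z i‖ + ‖v i‖) * ω i := mul_le_mul_of_nonneg_right h1 (hωnn i)
        _ = ‖z i‖ * ω i + ‖v i‖ * ω i := by ring
    -- f5 : TxS ≤ t
    have ht0 : t = ∑' i, ‖x i - y i‖ * ω i := hteq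
    have f5 : TxS ≤ t := by
      rw [hTxS, ht0]
      apply Summable.tsum_le_tsum _ hsumx hysum
      intro i
      by_cases hi : i ∈ S
      · simp only [hi, if_true]
        exact mul_nonneg (norm_nonneg _) (hωnn i)
      · simp only [hi, if_false]
        have hyi : y i = 0 := by
          by_contra hne'
          exact hi ((hSmem i).2 hne')
        rw [hyi, sub_zero]
    -- f1 : avS ≤ ρ TvS + κ r ‖A v‖
    have f1 : (∑ i ∈ S, ‖v i‖ * ω i) ≤ ρ * TvS + κ * r * ‖A v‖ :=
      nsp_l1 A ω hω s hs ρ κ hρ0.le hκ.le hA v hv1 (mem_l2 ω hω v hv1) S hSw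
    -- ℓ¹ bound
    have hTvSb : TvS ≤ (Δ + 2 * t + κ * r * ‖A v‖) / (1 - ρ) := by
      rw [le_div_iff₀ h1ρ, hΔdef]
      linarith [f3, f4, f5, f1, hwx, hwz]
    have hLv : (∑' i, ‖v i‖ * ω i) ≤
        (1 + ρ) * ((Δ + 2 * t + κ * r * ‖A v‖) / (1 - ρ)) + κ * r * ‖A v‖ := by
      have h2 := mul_le_mul_of_nonneg_left hTvSb (show (0:ℝ) ≤ 1 + ρ by linarith)
      linarith [f1, hwv, h2]
    have hC := l2_of_l1 A ω hω s hs ρ κ hρ0.le hκ.le hA v hv1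
    rw [← hrdef] at hC
    calc Real.sqrt (∑' i, ‖v i‖ ^ 2) ≤ (ρ + 1) / r * (∑' i, ‖v i‖ * ω i) + κ * ‖A v‖ := hC
      _ ≤ (ρ + 1) / r * ((1 + ρ) * ((Δ + 2 * t + κ * r * ‖A v‖) / (1 - ρ)) + κ * r * ‖A v‖)
          + κ * ‖A v‖ := by
          have := mul_le_mul_of_nonneg_left hLv (show (0:ℝ) ≤ (ρ + 1) / r by positivity)
          linarith
      _ = c * (Δ + 2 * t) + C2 * ‖A v‖ := by
          rw [hcdef, hC2def]
          field_simp
          ring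
  -- infimum step
  have hσ : sigma1 ω (s:ℝ) x = sInf SigSet := rfl
  have hlb : (Real.sqrt (∑' i, ‖v i‖ ^ 2) - c * Δ - C2 * ‖A v‖) / (2 * c) ≤ sigma1 ω (s:ℝ) x := by
    rw [hσ]
    apply le_csInf hne
    intro t ht
    rw [div_le_iff₀ (by positivity)]
    have h := key t ht
    have e : c * (Δ + 2 * t) = c * Δ + t * (2 * c) := by ring
    linarith [h, e]
  have h2 := (div_le_iff₀ (by positivity : (0:ℝ) < 2 * c)).1 hlb
  have hgoal : Real.sqrt (∑' i, ‖v i‖ ^ 2) ≤ c * (Δ + 2 * sigma1 ω (s:ℝ) x) + C2 * ‖A v‖ := by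
    nlinarith [h2]
  calc Real.sqrt (∑' i, ‖x i - z i‖ ^ 2) = Real.sqrt (∑' i, ‖v i‖ ^ 2) := rfl
    _ ≤ c * (Δ + 2 * sigma1 ω (s:ℝ) x) + C2 * ‖A v‖ := hgoal
    _ = ((ρ + 1) * ((1 + ρ) / (1 - ρ))) / Real.sqrt s *
          (wnorm1 ω z - wnorm1 ω x + 2 * sigma1 ω s x) +
        ((ρ + 1) * (2 * κ / (1 - ρ)) + κ) * ‖A v‖ := by rw [hcdef, hC2def, hΔdef, hrdef]
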